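/- If (≿, c) has a D-monotone justifiability representation, then c satisfies Irrelevance of Submaximal Alternatives (ISA): for any finite menu B and any A ⊆ S(B), c(B) = c(B \ A), where S(B) is the set of b ∈ B that are either strictly dominated by some b' ∈ B (b' ≻_D b) or excluded by some subset B' ⊂ B (meaning b ≿ x for all x ∈ c(B' ∪ {b}) and b ∉ c(B' ∪ {b})). -/
import Mathlib


open Finset

/-- A total (weak) order: complete, transitive, antisymmetric. -/
def TotalOrderRel {α : Type*} (r : α → α → Prop) : Prop :=
  (∀ a b : α, r a b ∨ r b a) ∧ Transitive r ∧ ∀ a b : α, r a b → r b a → a = b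

/-- The set of `r`-maximal elements of a set `S`. -/
def argmaxOn {α : Type*} (r : α → α → Prop) (S : Set α) : Set α :=
  {x ∈ S | ∀ y ∈ S, r x y}

/-- The justifiable set `M(A)`: union over justifications of their maximizers on `A`. -/
def justSet {α : Type*} (M : Set (α → α → Prop)) (A : Finset α) : Set α :=
  ⋃ r ∈ M, argmaxOn r (A : Set α)

/-- A justifiability representation for `(pref, c)`. -/
def JustRep {α : Type*} (pref : α → α → Prop) (c : Finset α → Finset α)
    (M : Set (α → α → Prop)) : Prop :=
  M.Nonempty ∧ (∀ r ∈ M, TotalOrderRel r) ∧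
    ∀ A : Finset α, A.Nonempty → (c A : Set α) = argmaxOn pref (justSet M A)

/-- Irrelevance of Unjustifiable Alternatives. -/
def IUA {α : Type*} [DecidableEq α] (pref : α → α → Prop)
    (c : Finset α → Finset α) : Prop :=
  ∀ (A : Finset α) (a : α), a ∈ A → (∀ b ∈ c A, pref a b) → a ∉ c A →
    ∀ B : Finset α, A ⊆ B → c (B.erase a) = c B

/-- Optimization: all chosen elements are indifferent. -/
def Optimization {α : Type*} (pref : α → α → Prop) (c : Finset α → Finset α) : Prop :=
  ∀ A : Finset α, A.Nonempty → ∀ a ∈ c A, ∀ b ∈ c A, pref a b ∧ pref b a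

/-- `A` excludes `b` from below: `b ∉ c(A ∪ {b})` and `b ≿ a` for all `a ∈ A`. -/
def ExclBelow {α : Type*} [DecidableEq α] (pref : α → α → Prop)
    (c : Finset α → Finset α) (A : Finset α) (b : α) : Prop :=
  b ∉ c (insert b A) ∧ ∀ x ∈ A, pref b x

lemma exists_rmax {α : Type*} {r : α → α → Prop} (htot : ∀ a b, r a b ∨ r b a)
    (htr : Transitive r) :
    ∀ (S : Finset α), S.Nonempty → ∃ x ∈ S, ∀ y ∈ S, r x y := by
  classical
  have hrefl : ∀ z, r z z := fun z => (htot z z).elim id id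
  intro S
  induction S using Finset.induction with
  | empty => intro h; simp at h
  | @insert a S ha ih =>
    intro _
    rcases S.eq_empty_or_nonempty with rfl | hS
    · refine ⟨a, by simp, ?_⟩
      intro y hy
      simp only [Finset.mem_insert, Finset.notMem_empty, or_false] at hy
      subst hy
      exact hrefl _
    · obtain ⟨x, hx, hmax⟩ := ih hS
      rcases htot a x with h | h
      · refine ⟨a, by simp, ?_⟩
        intro y hy
        rcases Finset.mem_insert.mp hy with rfl | hy
        · exact hrefl _
        · exact htr h (hmax y hy)
      · refine ⟨x, by simp [hx], ?_⟩
        intro y hy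
        rcases Finset.mem_insert.mp hy with rfl | hy
        · exact h
        · exact hmax y hy

/-- a D-monotone justifiability representation implies ISA. -/
theorem DMonotone_justRep_ISA {α : Type*} [DecidableEq α]
    (D pref : α → α → Prop) (c : Finset α → Finset α)
    (hDtrans : Transitive D) (hDasym : ∀ a b : α, D a b → ¬ D b a)
    (hcomp : ∀ a b : α, pref a b ∨ pref b a) (htrans : Transitive pref)
    (hsub : ∀ A : Finset α, c A ⊆ A)
    (hne : ∀ A : Finset α, A.Nonempty → (c A).Nonempty)
    (M : Set (α → α → Prop)) (hrep : JustRep pref c M)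
    (hmono : ∀ r ∈ M, ∀ a b : α, D a b → r a b ∧ ¬ r b a) :
    ∀ B A : Finset α,
      (∀ b ∈ A, b ∈ B ∧
        ((∃ b' ∈ B, D b' b) ∨
          ∃ B' ⊆ B, b ∉ B' ∧ (∀ x ∈ c (insert b B'), pref b x) ∧
            b ∉ c (insert b B'))) →
      c B = c (B \ A) := by
  classical
  obtain ⟨hMne, hMtot, hMrep⟩ := hrep
  intro B A hA
  have key : ∀ b ∈ A, b ∉ justSet M B := by
    intro b hb hjb
    obtain ⟨hbB, hcase⟩ := hA b hb
    simp only [justSet, Set.mem_iUnion] at hjb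
    obtain ⟨r, hr, hbmem, hbge⟩ := hjb
    rcases hcase with ⟨b', hb', hD⟩ | ⟨B', hB'sub, hbB', hpref, hbc⟩
    · exact (hmono r hr b' b hD).2 (hbge b' hb')
    · have hsubIns : (insert b B' : Finset α) ⊆ B := by
        intro x hx
        rcases Finset.mem_insert.mp hx with rfl | hx
        · exact hbB
        · exact hB'sub hx
      have hbj : b ∈ justSet M (insert b B') := by
        simp only [justSet, Set.mem_iUnion]
        exact ⟨r, hr, Finset.mem_insert_self _ _, fun y hy => hbge y (hsubIns hy)⟩
      have hnei : (insert b B' : Finset α).Nonempty := ⟨b, Finset.mem_insert_self _ _⟩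
      obtain ⟨a, ha⟩ := hne _ hnei
      have hcset := hMrep (insert b B') hnei
      have haset : a ∈ argmaxOn pref (justSet M (insert b B')) := by
        rw [← hcset]; exact ha
      obtain ⟨haj, hamax⟩ := haset
      have hbc' : b ∈ (c (insert b B') : Set α) := by
        rw [hcset]
        exact ⟨hbj, fun y hy => htrans (hpref a ha) (hamax y hy)⟩
      exact hbc hbc'
  rcases B.eq_empty_or_nonempty with rfl | hBne
  · have hAe : A = ∅ := by
      rcases Finset.eq_empty_or_nonempty A with h | ⟨b, hb⟩
      · exact h
      · exact absurd (hA b hb).1 (by simp)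
    simp [hAe]
  have hjeq : ∀ r ∈ M, argmaxOn r ((B \ A : Finset α) : Set α) = argmaxOn r (B : Set α) := by
    intro r hr
    obtain ⟨hrtot, hrtr, -⟩ := hMtot r hr
    obtain ⟨x, hxB, hxmax⟩ := exists_rmax hrtot hrtr B hBne
    have hxjust : x ∈ justSet M B := by
      simp only [justSet, Set.mem_iUnion]
      exact ⟨r, hr, hxB, fun y hy => hxmax y hy⟩
    have hxBA : x ∈ B \ A := Finset.mem_sdiff.mpr ⟨hxB, fun h => key x h hxjust⟩
    ext y
    constructor
    · rintro ⟨hy, hymax⟩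
      have hyB : y ∈ B := (Finset.mem_sdiff.mp hy).1
      exact ⟨hyB, fun z hz => hrtr (hymax x hxBA) (hxmax z hz)⟩
    · rintro ⟨hy, hymax⟩
      have hyj : y ∈ justSet M B := by
        simp only [justSet, Set.mem_iUnion]
        exact ⟨r, hr, hy, hymax⟩
      have hyBA : y ∈ B \ A := Finset.mem_sdiff.mpr ⟨hy, fun h => key y h hyj⟩
      exact ⟨hyBA, fun z hz => hymax z (Finset.mem_sdiff.mp hz).1⟩
  have hjseq : justSet M (B \ A) = justSet M B := by
    unfold justSet
    exact Set.iUnion₂_congr hjeq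
  have hBAne : (B \ A).Nonempty := by
    obtain ⟨r, hr⟩ := hMne
    obtain ⟨hrtot, hrtr, -⟩ := hMtot r hr
    obtain ⟨x, hxB, hxmax⟩ := exists_rmax hrtot hrtr B hBne
    have hxjust : x ∈ justSet M B := by
      simp only [justSet, Set.mem_iUnion]
      exact ⟨r, hr, hxB, fun y hy => hxmax y hy⟩
    exact ⟨x, Finset.mem_sdiff.mpr ⟨hxB, fun h => key x h hxjust⟩⟩
  apply Finset.coe_injective
  rw [hMrep B hBne, hMrep (B \ A) hBAne, hjseq]
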